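/- For every k ≥ 1 and every λ > 0, the trace map T_k(x, y, z) = (x U_k(y) − z U_{k-1}(y), x U_{k-1}(y) − z U_{k-2}(y), y) preserves the cubic surface S_λ = { (x,y,z) ∈ ℝ³ : x² + y² + z² − 2xyz = 1 + λ²/4 }. That is, if (x,y,z) ∈ S_λ, then T_k(x,y,z) ∈ S_λ. -/
import Mathlib


/-- Shifted Chebyshev polynomials of the second kind: `cheb (k+1) = U_k`. -/
def cheb : ℕ → ℝ → ℝ
  | 0, _ => 0
  | 1, _ => 1
  | n + 2, y => 2 * y * cheb (n + 1) y - cheb n y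

/-- The trace map `T_k` (here `cheb (k+1) = U_k`, `cheb k = U_{k-1}`, `cheb (k-1) = U_{k-2}`). -/
def traceMap (k : ℕ) : ℝ × ℝ × ℝ → ℝ × ℝ × ℝ := fun p =>
  (p.1 * cheb (k + 1) p.2.1 - p.2.2 * cheb k p.2.1,
   p.1 * cheb k p.2.1 - p.2.2 * cheb (k - 1) p.2.1,
   p.2.1)

lemma cheb_pell (y : ℝ) : ∀ k : ℕ,
    cheb (k + 1) y ^ 2 + cheb k y ^ 2 - 2 * y * cheb (k + 1) y * cheb k y = 1 := by
  intro k
  induction k with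
  | zero => simp [cheb]
  | succ n ih =>
      have : cheb (n + 2) y = 2 * y * cheb (n + 1) y - cheb n y := rfl
      rw [this]
      linear_combination ih

lemma cheb_mix (y : ℝ) (k : ℕ) :
    cheb (k + 2) y * cheb (k + 1) y + cheb (k + 1) y * cheb k y
      - y * (cheb (k + 2) y * cheb k y + cheb (k + 1) y ^ 2) = y := by
  have hrec : cheb (k + 2) y = 2 * y * cheb (k + 1) y - cheb k y := rfl
  rw [hrec]
  linear_combination y * cheb_pell y k

theorem stmt3 (k : ℕ) (hk : 1 ≤ k) (lam : ℝ) (hlam : 0 < lam) (x y z : ℝ)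
    (h : x ^ 2 + y ^ 2 + z ^ 2 - 2 * x * y * z = 1 + lam ^ 2 / 4) :
    (traceMap k (x, y, z)).1 ^ 2 + (traceMap k (x, y, z)).2.1 ^ 2
      + (traceMap k (x, y, z)).2.2 ^ 2
      - 2 * (traceMap k (x, y, z)).1 * (traceMap k (x, y, z)).2.1
          * (traceMap k (x, y, z)).2.2
      = 1 + lam ^ 2 / 4 := by
  obtain ⟨m, rfl⟩ : ∃ m, k = m + 1 := ⟨k - 1, (Nat.succ_pred_eq_of_pos hk).symm⟩
  simp only [traceMap, Nat.add_sub_cancel]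
  linear_combination x ^ 2 * cheb_pell y (m + 1) + z ^ 2 * cheb_pell y m
    - 2 * x * z * cheb_mix y m + h
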